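/- Let I = {i₁ < … < i_r} ⊆ {1,…,m} and J = {j₁ < … < j_s} ⊆ {1,…,n}. The ℂ-algebra homomorphism φ : R_{r,s} → R_{m,n} determined by φ(y_{ab}) = x_{i_a j_b} (for 1 ≤ a ≤ r, 1 ≤ b ≤ s, where y_{ab} are the variables of R_{r,s}) is a Poisson homomorphism: φ({f, g}_{r,s}) = {φ(f), φ(g)}_{m,n} for all f, g ∈ R_{r,s}. (Equivalently, the projection of an m×n matrix to its submatrix with rows I and columns J is a Poisson map between the matrix affine Poisson spaces.) -/

import Mathlib

open MvPolynomial

/-- The quadratic Poisson bracket on the polynomial algebra of the matrix affine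
Poisson space `M_{m,n}`. -/
noncomputable def pois {m n : ℕ} (f g : MvPolynomial (Fin m × Fin n) ℂ) :
    MvPolynomial (Fin m × Fin n) ℂ :=
  ∑ i : Fin m, ∑ k : Fin m, ∑ j : Fin n, ∑ l : Fin n,
    (((k : ℤ) - (i : ℤ)).sign + ((l : ℤ) - (j : ℤ)).sign) •
      (X (i, l) * X (k, j) * pderiv (i, j) f * pderiv (k, l) g)

/-- The minor `Δ_{I,J}` (equal to `0` by convention if `|I| ≠ |J|`). -/
noncomputable def Delta {m n : ℕ} (I : Finset (Fin m)) (J : Finset (Fin n)) :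
    MvPolynomial (Fin m × Fin n) ℂ :=
  if h : J.card = I.card then
    Matrix.det (Matrix.of fun a b : Fin I.card =>
      X ((I.orderIsoOfFin rfl a).1, (J.orderIsoOfFin h b).1))
  else 0

/-- Evaluation of a polynomial at a matrix. -/
noncomputable def evalM {m n : ℕ} (Y : Matrix (Fin m) (Fin n) ℂ)
    (f : MvPolynomial (Fin m × Fin n) ℂ) : ℂ :=
  eval (fun p => Y p.1 p.2) f

/-- auxiliary -/
lemma pderiv_rename_not_mem {σ τ : Type*} [DecidableEq σ] [DecidableEq τ]
    {e : σ → τ} {p : τ} (hp : p ∉ Set.range e) (f : MvPolynomial σ ℂ) :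
    pderiv p (rename e f) = 0 := by
  induction f using MvPolynomial.induction_on with
  | C a => simp
  | add f g hf hg => simp [hf, hg]
  | mul_X f i hf =>
    have : e i ≠ p := fun h => hp ⟨i, h⟩
    simp [hf, pderiv_X, Pi.single_apply, this]

lemma sign_strictMono {r m : ℕ} {e : Fin r → Fin m} (he : StrictMono e) (a c : Fin r) :
    (((e c : ℤ)) - (e a : ℤ)).sign = ((c : ℤ) - (a : ℤ)).sign := by
  rcases lt_trichotomy a c with h | h | h
  · have h1 : (a : ℤ) < c := by exact_mod_cast h
    have h2 : ((e a : ℕ) : ℤ) < ((e c : ℕ) : ℤ) := by exact_mod_cast he h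
    rw [Int.sign_eq_one_of_pos (by omega), Int.sign_eq_one_of_pos (by omega)]
  · subst h; simp
  · have h1 : (c : ℤ) < a := by exact_mod_cast h
    have h2 : ((e c : ℕ) : ℤ) < ((e a : ℕ) : ℤ) := by exact_mod_cast he h
    rw [Int.sign_eq_neg_one_of_neg (by omega), Int.sign_eq_neg_one_of_neg (by omega)]

lemma sum_range_zero {r m : ℕ} {M : Type*} [AddCommMonoid M] {e : Fin r → Fin m}
    (he : Function.Injective e) (F : Fin m → M)
    (h0 : ∀ i, i ∉ Set.range e → F i = 0) :
    ∑ i : Fin m, F i = ∑ a : Fin r, F (e a) := by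
  rw [← Finset.sum_image (f := F) (g := e)
    (fun x _ y _ h => he h)]
  refine (Finset.sum_subset (Finset.subset_univ _) ?_).symm
  intro i _ hi
  exact h0 i (by simpa [Set.range, eq_comm] using hi)

theorem submatrix_projection_poisson (m n : ℕ) (hm : 0 < m) (hn : 0 < n) (r s : ℕ)
    (I : Finset (Fin m)) (J : Finset (Fin n))
    (hI : I.card = r) (hJ : J.card = s)
    (f g : MvPolynomial (Fin r × Fin s) ℂ) :
    rename (fun p : Fin r × Fin s => ((I.orderIsoOfFin hI p.1).1, (J.orderIsoOfFin hJ p.2).1))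
        (pois f g)
      = pois
          (rename (fun p : Fin r × Fin s =>
            ((I.orderIsoOfFin hI p.1).1, (J.orderIsoOfFin hJ p.2).1)) f)
          (rename (fun p : Fin r × Fin s =>
            ((I.orderIsoOfFin hI p.1).1, (J.orderIsoOfFin hJ p.2).1)) g) := by
  set eI : Fin r → Fin m := fun a => (I.orderIsoOfFin hI a).1 with heI
  set eJ : Fin s → Fin n := fun b => (J.orderIsoOfFin hJ b).1 with heJ
  have heIm : StrictMono eI := fun a b h => (I.orderIsoOfFin hI).strictMono h
  have heJm : StrictMono eJ := fun a b h => (J.orderIsoOfFin hJ).strictMono h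
  set σ : Fin r × Fin s → Fin m × Fin n := fun p => (eI p.1, eJ p.2) with hσ
  have hσinj : Function.Injective σ := fun p q h => by
    have := Prod.ext_iff.mp h
    exact Prod.ext (heIm.injective this.1) (heJm.injective this.2)
  have hrange : ∀ p : Fin m × Fin n, p ∉ Set.range σ → p.1 ∉ Set.range eI ∨ p.2 ∉ Set.range eJ := by
    intro p hp
    by_contra h
    push_neg at h
    obtain ⟨⟨a, ha⟩, ⟨b, hb⟩⟩ := h
    exact hp ⟨(a, b), by simp [hσ, ha, hb]⟩
  unfold pois
  -- transform LHS
  rw [map_sum]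
  have key : ∀ F : MvPolynomial (Fin r × Fin s) ℂ, ∀ a b,
      pderiv (eI a, eJ b) (rename σ F) = rename σ (pderiv (a, b) F) := by
    intro F a b
    exact (pderiv_rename hσinj (a, b) F)
  -- RHS side: reduce the four sums over Fin m/Fin n to Fin r/Fin s
  have zero_term : ∀ (i k : Fin m) (j l : Fin n),
      (i ∉ Set.range eI ∨ j ∉ Set.range eJ) ∨ (k ∉ Set.range eI ∨ l ∉ Set.range eJ) →
      (((k : ℤ) - (i : ℤ)).sign + ((l : ℤ) - (j : ℤ)).sign) •
        (X (i, l) * X (k, j) * pderiv (i, j) (rename σ f) * pderiv (k, l) (rename σ g)) = 0 := by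
    intro i k j l h
    rcases h with h | h
    · have : pderiv (i, j) (rename σ f) = 0 := by
        apply pderiv_rename_not_mem
        rintro ⟨⟨a, b⟩, hab⟩
        simp only [hσ, Prod.mk.injEq] at hab
        rcases h with h | h
        · exact h ⟨a, hab.1⟩
        · exact h ⟨b, hab.2⟩
      simp [this]
    · have : pderiv (k, l) (rename σ g) = 0 := by
        apply pderiv_rename_not_mem
        rintro ⟨⟨a, b⟩, hab⟩
        simp only [hσ, Prod.mk.injEq] at hab
        rcases h with h | h
        · exact h ⟨a, hab.1⟩
        · exact h ⟨b, hab.2⟩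
      simp [this]
  have rhs_eq :
      (∑ i : Fin m, ∑ k : Fin m, ∑ j : Fin n, ∑ l : Fin n,
        (((k : ℤ) - (i : ℤ)).sign + ((l : ℤ) - (j : ℤ)).sign) •
          (X (i, l) * X (k, j) * pderiv (i, j) (rename σ f) * pderiv (k, l) (rename σ g)))
      = ∑ a : Fin r, ∑ c : Fin r, ∑ b : Fin s, ∑ d : Fin s,
        (((eI c : ℤ) - (eI a : ℤ)).sign + ((eJ d : ℤ) - (eJ b : ℤ)).sign) •
          (X (eI a, eJ d) * X (eI c, eJ b) * pderiv (eI a, eJ b) (rename σ f) *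
            pderiv (eI c, eJ d) (rename σ g)) := by
    rw [sum_range_zero heIm.injective _ (fun i hi => Finset.sum_eq_zero fun k _ =>
      Finset.sum_eq_zero fun j _ => Finset.sum_eq_zero fun l _ =>
        zero_term i k j l (Or.inl (Or.inl hi)))]
    refine Finset.sum_congr rfl fun a _ => ?_
    rw [sum_range_zero heIm.injective _ (fun k hk =>
      Finset.sum_eq_zero fun j _ => Finset.sum_eq_zero fun l _ =>
        zero_term (eI a) k j l (Or.inr (Or.inl hk)))]
    refine Finset.sum_congr rfl fun c _ => ?_
    rw [sum_range_zero heJm.injective _ (fun j hj =>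
      Finset.sum_eq_zero fun l _ =>
        zero_term (eI a) (eI c) j l (Or.inl (Or.inr hj)))]
    refine Finset.sum_congr rfl fun b _ => ?_
    rw [sum_range_zero heJm.injective _ (fun l hl =>
        zero_term (eI a) (eI c) (eJ b) l (Or.inr (Or.inr hl)))]
  rw [rhs_eq]
  refine Finset.sum_congr rfl fun a _ => ?_
  rw [map_sum]
  refine Finset.sum_congr rfl fun c _ => ?_
  rw [map_sum]
  refine Finset.sum_congr rfl fun b _ => ?_
  rw [map_sum]
  refine Finset.sum_congr rfl fun d _ => ?_
  rw [sign_strictMono heIm, sign_strictMono heJm, map_zsmul]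
  congr 1
  simp only [map_mul, rename_X, key]
  rfl
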